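/- Let H be a complex Hilbert space and let A, B : H → H be bounded skew-adjoint operators (A* = −A and B* = −B). Then for every u ∈ ℝ, every t ≥ 0, and every ψ ∈ H with ‖ψ‖ = 1, one has ‖A(exp(t(A + u·B))ψ)‖ ≤ ‖Aψ‖ + 2|u|·‖B‖, where exp denotes the operator exponential. -/

import Mathlib

open ContinuousLinearMap

/-- Energy growth bound along the propagator: for bounded skew-adjoint operators
`A`, `B` on a complex Hilbert space, every `u ∈ ℝ`, `t ≥ 0`, and unit vector `ψ`,
`‖A e^{t(A+uB)} ψ‖ ≤ ‖Aψ‖ + 2|u|·‖B‖`. -/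
theorem energy_growth_bound
    {H : Type*} [NormedAddCommGroup H] [InnerProductSpace ℂ H] [CompleteSpace H]
    (A B : H →L[ℂ] H) (hA : ContinuousLinearMap.adjoint A = -A)
    (hB : ContinuousLinearMap.adjoint B = -B) :
    ∀ (u : ℝ) (t : ℝ), 0 ≤ t → ∀ ψ : H, ‖ψ‖ = 1 →
      ‖A (NormedSpace.exp ((t : ℂ) • (A + (u : ℂ) • B)) ψ)‖
        ≤ ‖A ψ‖ + 2 * |u| * ‖B‖ := by
  intro u t ht ψ hψ
  set C : H →L[ℂ] H := A + (u : ℂ) • B with hC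
  set S : H →L[ℂ] H := (t : ℂ) • C with hS
  have hskew : star S = -S := by
    have hsA : star A = -A := by rw [star_eq_adjoint, hA]
    have hsB : star B = -B := by rw [star_eq_adjoint, hB]
    rw [hS, hC, star_smul, star_add, star_smul, hsA, hsB]
    simp only [Complex.star_def, Complex.conj_ofReal]
    module
  set E : H →L[ℂ] H := NormedSpace.exp S with hE
  have hunit : E ∈ unitary (H →L[ℂ] H) :=
    letI : NormedAlgebra ℚ (H →L[ℂ] H) := NormedAlgebra.restrictScalars ℚ ℂ _
    NormedSpace.exp_mem_unitary_of_mem_skewAdjoint (skewAdjoint.mem_iff.mpr hskew)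
  have hnorm : ∀ x : H, ‖E x‖ = ‖x‖ := fun x => norm_map_of_mem_unitary hunit x
  have hcomm : C * E = E * C := by
    have : Commute C E := ((Commute.refl C).smul_right (t : ℂ)).exp_right
    exact this.eq
  have key : A * E = E * A + (u : ℂ) • (E * B) - (u : ℂ) • (B * E) := by
    have := hcomm
    rw [hC] at this
    have h2 : A * E + (u : ℂ) • (B * E) = E * A + (u : ℂ) • (E * B) := by
      calc A * E + (u : ℂ) • (B * E) = (A + (u : ℂ) • B) * E := by
            rw [add_mul, smul_mul_assoc]
        _ = E * (A + (u : ℂ) • B) := this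
        _ = E * A + (u : ℂ) • (E * B) := by rw [mul_add, mul_smul_comm]
    linear_combination (norm := module) h2
  have happ : A (E ψ) = E (A ψ) + (u : ℂ) • (E (B ψ)) - (u : ℂ) • (B (E ψ)) := by
    have := congrArg (fun T : H →L[ℂ] H => T ψ) key
    simpa using this
  have hBψ : ‖B ψ‖ ≤ ‖B‖ := by simpa [hψ] using B.le_opNorm ψ
  have hBEψ : ‖B (E ψ)‖ ≤ ‖B‖ := by simpa [hnorm ψ, hψ] using B.le_opNorm (E ψ)
  have hu : ‖(u : ℂ)‖ = |u| := by simp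
  calc ‖A (E ψ)‖ = ‖E (A ψ) + (u : ℂ) • (E (B ψ)) - (u : ℂ) • (B (E ψ))‖ := by rw [happ]
    _ ≤ ‖E (A ψ) + (u : ℂ) • (E (B ψ))‖ + ‖(u : ℂ) • (B (E ψ))‖ := norm_sub_le _ _
    _ ≤ ‖E (A ψ)‖ + ‖(u : ℂ) • (E (B ψ))‖ + ‖(u : ℂ) • (B (E ψ))‖ := by
        gcongr; exact norm_add_le _ _
    _ = ‖A ψ‖ + |u| * ‖B ψ‖ + |u| * ‖B (E ψ)‖ := by
        rw [hnorm, norm_smul, norm_smul, hu, hnorm]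
    _ ≤ ‖A ψ‖ + |u| * ‖B‖ + |u| * ‖B‖ := by gcongr
    _ = ‖A ψ‖ + 2 * |u| * ‖B‖ := by ring
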